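/- Suppose α₀ > α₁ ≥ 1, β₀ > β₁ ≥ 1 are integers with α₁β₀ − β₁α₀ = σ = ±1. For any integer j with 1 ≤ j < β₀, one has {α₀(j+β₁)/β₀} = {α₀ j/β₀} − σ/β₀ − Δ'(σ, j), where Δ'(σ, j) = 1 if j = β₀ − β₁ and σ = −1, and Δ'(σ, j) = 0 otherwise. -/

import Mathlib

theorem stmt_8 (α₀ α₁ β₀ β₁ : ℕ) (hα₁ : 1 ≤ α₁) (hβ₁ : 1 ≤ β₁)
    (hα : α₁ < α₀) (hβ : β₁ < β₀) (σ : ℤ) (hσ : σ = 1 ∨ σ = -1)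
    (h : (α₁ : ℤ) * β₀ - (β₁ : ℤ) * α₀ = σ)
    (j : ℕ) (hj1 : 1 ≤ j) (hj2 : j < β₀) :
    Int.fract ((α₀ * (j + β₁) : ℚ) / β₀) =
      Int.fract ((α₀ * j : ℚ) / β₀) - (σ : ℚ) / β₀ -
        (if j = β₀ - β₁ ∧ σ = -1 then 1 else 0) := by
  have hβ0 : 0 < β₀ := by omega
  have hβQ : (β₀:ℚ) ≠ 0 := by positivity
  have hco : IsCoprime (β₀:ℤ) (α₀:ℤ) := by
    refine ⟨σ*α₁, -(σ*β₁), ?_⟩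
    rcases hσ with rfl | rfl
    · linear_combination h
    · linear_combination -h
  have key : (α₀ * (j + β₁) : ℚ) / β₀ =
      (((α₀*j : ℤ) - σ : ℤ) : ℚ) / β₀ + ((α₁:ℤ) : ℚ) := by
    have h' : (α₁ : ℚ) * β₀ - (β₁ : ℚ) * α₀ = σ := by exact_mod_cast h
    field_simp
    push_cast
    ring_nf
    linear_combination -h'
  rw [key, Int.fract_add_intCast]
  rw [show ((α₀*j : ℚ)) = (((α₀*j:ℤ)):ℚ) by push_cast; ring]
  rw [Int.fract_div_intCast_eq_div_intCast_mod, Int.fract_div_intCast_eq_div_intCast_mod]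
  set r : ℤ := (α₀*j : ℤ) % β₀ with hr
  have hrlt : r < β₀ := Int.emod_lt_of_pos _ (by exact_mod_cast hβ0)
  have hrnn : 0 ≤ r := Int.emod_nonneg _ (by exact_mod_cast hβ0.ne')
  have hrne : r ≠ 0 := by
    intro h0
    have h4 : (β₀:ℤ) ∣ (α₀:ℤ)*j := Int.dvd_of_emod_eq_zero h0
    have h5 : (β₀:ℤ) ∣ (j:ℤ) := hco.dvd_of_dvd_mul_left h4
    have h6 : β₀ ∣ j := by exact_mod_cast h5
    exact absurd (Nat.le_of_dvd (by omega) h6) (by omega)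
  have hmod : ((α₀*j : ℤ) - σ) % β₀ = (r - σ) % β₀ := by
    rw [hr]
    conv_rhs => rw [Int.sub_emod, Int.emod_emod_of_dvd _ dvd_rfl, ← Int.sub_emod]
  rw [hmod]
  rcases hσ with rfl | rfl
  · have heq : (r - 1) % β₀ = r - 1 := Int.emod_eq_of_lt (by omega) (by omega)
    rw [heq, if_neg (fun hh => by exact absurd hh.2 (by norm_num))]
    push_cast
    ring
  · by_cases hc : j = β₀ - β₁
    · have hjz : (j:ℤ) = (β₀:ℤ) - β₁ := by omega
      have hαβ : (α₀:ℤ)*β₁ = α₁*β₀ + 1 := by linarith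
      have hrval : r = β₀ - 1 := by
        have he : (α₀:ℤ)*j = ((β₀:ℤ) - 1) + β₀*((α₀:ℤ) - α₁ - 1) := by
          rw [hjz]; linarith [hαβ]
        rw [hr, he, Int.add_mul_emod_self_left]
        exact Int.emod_eq_of_lt (by omega) (by omega)
      have hz : ((β₀:ℤ) - 1 - (-1)) % β₀ = 0 := by
        simp [show (β₀:ℤ) - 1 - (-1) = β₀ by ring]
      rw [hrval, hz, if_pos ⟨hc, rfl⟩]
      push_cast
      field_simp
      ring
    · have hrne1 : r ≠ β₀ - 1 := by
        intro h1
        have hdvd : (β₀:ℤ) ∣ (α₀:ℤ)*j + 1 := by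
          have h2 : ((α₀:ℤ)*j + 1) % β₀ = (r + 1) % β₀ := by
            conv_rhs => rw [hr, Int.add_emod, Int.emod_emod_of_dvd _ dvd_rfl, ← Int.add_emod]
          have h3 : ((α₀:ℤ)*j + 1) % β₀ = 0 := by
            rw [h2, h1, show (β₀:ℤ) - 1 + 1 = β₀ by ring, Int.emod_self]
          exact Int.dvd_of_emod_eq_zero h3
        have hαβ : (α₀:ℤ)*β₁ = α₁*β₀ + 1 := by linarith
        have hdvd2 : (β₀:ℤ) ∣ (α₀:ℤ)*((j:ℤ) - (β₀ - β₁)) := by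
          have he : (α₀:ℤ)*((j:ℤ) - (β₀ - β₁)) = ((α₀:ℤ)*j + 1) + ((α₁:ℤ) - α₀)*β₀ := by
            linarith [hαβ]
          rw [he]
          exact dvd_add hdvd ⟨(α₁:ℤ) - α₀, by ring⟩
        have hdvd3 : (β₀:ℤ) ∣ ((j:ℤ) - (β₀ - β₁)) := hco.dvd_of_dvd_mul_left hdvd2
        have hne : (j:ℤ) - ((β₀:ℤ) - β₁) ≠ 0 := by
          intro h0; apply hc; omega
        have hle := Int.le_of_dvd (abs_pos.mpr hne) ((dvd_abs _ _).mpr hdvd3)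
        have habs : |(j:ℤ) - ((β₀:ℤ) - β₁)| < β₀ := abs_lt.mpr ⟨by omega, by omega⟩
        exact absurd habs (not_lt.mpr hle)
      have heq : (r - (-1)) % β₀ = r + 1 := by
        rw [show r - (-1) = r + 1 by ring]
        exact Int.emod_eq_of_lt (by omega) (by omega)
      rw [heq, if_neg (fun hh => hc hh.1)]
      push_cast
      ring
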